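/- For every admissible subgroup L of ℤ × ℤ, the rhombitrihexagonal torus graph G(L) — the edge graph of the semi-equivelar map of type {6,4,3,4} on the torus determined by L — is Hamiltonian. -/

import Mathlib

/-- `e₁ = (1,0)` in `ℤ × ℤ`. -/
def e₁ : ℤ × ℤ := (1, 0)

/-- `e₂ = (0,1)` in `ℤ × ℤ`. -/
def e₂ : ℤ × ℤ := (0, 1)

/-- A subgroup `L ≤ ℤ × ℤ` is admissible if it has finite index and contains no nonzero
vector `(v₁, v₂)` with `|v₁| ≤ 2` and `|v₂| ≤ 2`. -/
def Admissible (L : AddSubgroup (ℤ × ℤ)) : Prop :=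
  Finite ((ℤ × ℤ) ⧸ L) ∧ ∀ v ∈ L, v ≠ 0 → ¬(|v.1| ≤ 2 ∧ |v.2| ≤ 2)

/-- A graph is Hamiltonian if it contains a cycle visiting every vertex (exactly once:
a cycle repeats no vertex other than its basepoint). -/
def SimpleGraph.Hamiltonian {α : Type*} (G : SimpleGraph α) : Prop :=
  ∃ (a : α) (p : G.Walk a a), p.IsCycle ∧ ∀ v, v ∈ p.support

/-- The six direction vectors `d : ℤ/6 → ℤ × ℤ`:
`d₀ = (1,0)`, `d₁ = (0,1)`, `d₂ = (−1,1)`, `d₃ = (−1,0)`, `d₄ = (0,−1)`, `d₅ = (1,−1)`. -/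
def d : Fin 6 → ℤ × ℤ := ![(1, 0), (0, 1), (-1, 1), (-1, 0), (0, -1), (1, -1)]

/-- The edge relation of the rhombitrihexagonal graph over an abelian group `A`, with
direction vectors `D : ℤ/6 → A` (second coordinates are taken mod 6). -/
def rhombiTriHexRel {A : Type*} [AddCommGroup A] (D : Fin 6 → A) :
    A × Fin 6 → A × Fin 6 → Prop := fun u v =>
  (∃ (x : A) (t : Fin 6), u = (x, t) ∧ v = (x, t + 1)) ∨
  (∃ (x : A) (t : Fin 6), u = (x, t) ∧ v = (x + D t, t + 4))

/-- The rhombitrihexagonal graph over an abelian group `A`. -/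
def rhombiTriHexGraph {A : Type*} [AddCommGroup A] (D : Fin 6 → A) :
    SimpleGraph (A × Fin 6) :=
  SimpleGraph.fromRel (rhombiTriHexRel D)

/-- The rhombitrihexagonal torus graph `G(L)`, the edge graph of the semi-equivelar map
of type `{6,4,3,4}` on the torus determined by `L`. -/
def rhombiTriHexTorusGraph (L : AddSubgroup (ℤ × ℤ)) :
    SimpleGraph (((ℤ × ℤ) ⧸ L) × Fin 6) :=
  rhombiTriHexGraph (fun t => QuotientAddGroup.mk (d t))

namespace RTH

open SimpleGraph Walk

section Cut

variable {α : Type*} [DecidableEq α] {G : SimpleGraph α}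

lemma path_loop {u : α} (q : G.Walk u u) (h : q.IsPath) : q = Walk.nil := by
  cases q with
  | nil => rfl
  | cons h' q' =>
    exfalso
    rw [Walk.isPath_def, Walk.support_cons, List.nodup_cons] at h
    exact h.1 q'.end_mem_support

lemma edge_end : ∀ {w u : α} (p : G.Walk w u), p.IsPath → w ≠ u → ∀ {b : α},
    s(u, b) ∈ p.edges → ∃ (q : G.Walk w b) (h : G.Adj b u), p = q.concat h := by
  intro w u p
  induction p with
  | nil => intro _ _ b hb; simp at hb
  | @cons w v u h q ih =>
    intro hp hwu b hb
    rw [Walk.edges_cons, List.mem_cons] at hb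
    rcases hb with hb | hb
    · rcases Sym2.eq_iff.mp hb with ⟨h1, h2⟩ | ⟨h1, h2⟩
      · exact absurd h1 (Ne.symm hwu)
      · subst h2
        subst h1
        have hq : q = Walk.nil := path_loop q hp.of_cons
        subst hq
        exact ⟨Walk.nil, h, (Walk.concat_nil h).symm⟩
    · have hvu : v ≠ u := by
        rintro rfl
        rw [path_loop q hp.of_cons] at hb
        simp at hb
      obtain ⟨q₂, h₂, rfl⟩ := ih hp.of_cons hvu hb
      exact ⟨Walk.cons h q₂, h₂, by rw [Walk.concat_cons]⟩

lemma cycle_cut_base {a : α} (p : G.Walk a a) (hp : p.IsCycle) {b : α}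
    (he : s(a, b) ∈ p.edges) :
    ∃ q : G.Walk b a, q.IsPath ∧ q.support.Perm p.support.tail ∧
      (s(a, b) :: q.edges).Perm p.edges := by
  cases p with
  | nil => simp at he
  | @cons a w _ h q =>
    rw [Walk.cons_isCycle_iff] at hp
    obtain ⟨hqp, hne⟩ := hp
    rw [Walk.edges_cons, List.mem_cons] at he
    rcases he with he | he
    · have hb : b = w := by
        rcases Sym2.eq_iff.mp he with ⟨-, h2⟩ | ⟨h1, h2⟩
        · exact h2
        · exact absurd h1 (G.ne_of_adj h)
      subst hb
      exact ⟨q, hqp, by simp, by rw [he]; simp⟩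
    · have hwa : w ≠ a := by
        rintro rfl
        rw [path_loop q hqp] at he
        simp at he
      obtain ⟨q₂, h₂, rfl⟩ := edge_end q hqp hwa he
      have hnd := hqp
      rw [Walk.isPath_def, Walk.support_concat,
        List.nodup_append] at hnd
      have hna : a ∉ q₂.support := fun hm => hnd.2.2 a hm a (List.mem_singleton.mpr rfl) rfl
      have hnodup : ((Walk.cons h q₂).support).Nodup := by
        rw [Walk.support_cons]
        exact List.nodup_cons.mpr ⟨hna, hnd.1⟩
      refine ⟨(Walk.cons h q₂).reverse, (Walk.isPath_def _).mpr (by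
          rw [Walk.support_reverse]; exact List.nodup_reverse.mpr hnodup), ?_, ?_⟩
      · rw [Walk.support_reverse, Walk.support_cons, Walk.support_cons,
          List.tail_cons, Walk.support_concat]
        refine ((a :: q₂.support).reverse_perm).trans ?_
        exact (List.perm_append_singleton a q₂.support).symm
      · rw [Walk.edges_reverse, Walk.edges_cons, Walk.edges_cons, Walk.edges_concat,
          List.concat_eq_append]
        refine (List.Perm.cons _ ((s(a,w) :: q₂.edges).reverse_perm)).trans ?_
        have h1 : List.Perm (s(a,b) :: s(a,w) :: q₂.edges)
            (s(a,w) :: s(a,b) :: q₂.edges) := List.Perm.swap _ _ _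
        refine h1.trans (List.Perm.cons _ ?_)
        rw [Sym2.eq_swap]
        exact (List.perm_append_singleton _ _).symm

lemma cycle_cut {v : α} (p : G.Walk v v) (hp : p.IsCycle) {a b : α}
    (he : s(a, b) ∈ p.edges) :
    ∃ q : G.Walk b a, q.IsPath ∧ q.support.Perm p.support.tail ∧
      (s(a, b) :: q.edges).Perm p.edges := by
  have ha : a ∈ p.support := p.fst_mem_support_of_mem_edges he
  have hre : (p.rotate a ha).edges.Perm p.edges := (p.rotate_edges a ha).perm
  have hrs : (p.rotate a ha).support.tail.Perm p.support.tail := (p.support_rotate a ha).perm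
  obtain ⟨q, h1, h2, h3⟩ := cycle_cut_base (p.rotate a ha) (hp.rotate ha) (hre.mem_iff.mpr he)
  exact ⟨q, h1, h2.trans hrs, h3.trans hre⟩

end Cut

section Main

variable {A : Type*} [AddCommGroup A] (D : Fin 6 → A)

lemma hexAdj (x : A) (t : Fin 6) : (rhombiTriHexGraph D).Adj (x, t) (x, t + 1) := by
  have ht : ∀ s : Fin 6, s ≠ s + 1 := by decide
  rw [rhombiTriHexGraph, SimpleGraph.fromRel_adj]
  exact ⟨fun hc => ht t (congrArg Prod.snd hc), Or.inl (Or.inl ⟨x, t, rfl, rfl⟩)⟩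

lemma crossAdj (x : A) (t : Fin 6) :
    (rhombiTriHexGraph D).Adj (x, t) (x + D t, t + 4) := by
  have ht : ∀ s : Fin 6, s ≠ s + 4 := by decide
  rw [rhombiTriHexGraph, SimpleGraph.fromRel_adj]
  exact ⟨fun hc => ht t (congrArg Prod.snd hc), Or.inl (Or.inr ⟨x, t, rfl, rfl⟩)⟩

variable [DecidableEq A]

/-- The invariant carried through the induction: a cycle on exactly the hexagons of `S`,
containing every hexagon edge `{(x,t),(x,t+1)}` for which `x + D t` is outside `S`. -/
def Good (S : Finset A) : Prop :=
  ∃ (v : A × Fin 6) (p : (rhombiTriHexGraph D).Walk v v), p.IsCycle ∧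
    (∀ z : A × Fin 6, z ∈ p.support ↔ z.1 ∈ S) ∧
    ∀ x ∈ S, ∀ t : Fin 6, x + D t ∉ S → s(((x, t) : A × Fin 6), (x, t + 1)) ∈ p.edges

lemma good_base : Good D {(0 : A)} := by
  refine ⟨((0 : A), 0),
    .cons (hexAdj D 0 0) (.cons (hexAdj D 0 1) (.cons (hexAdj D 0 2)
      (.cons (hexAdj D 0 3) (.cons (hexAdj D 0 4) (.cons (hexAdj D 0 5) .nil))))),
    ?_, ?_, ?_⟩
  · rw [Walk.cons_isCycle_iff]
    constructor
    · rw [Walk.isPath_def]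
      simp [Prod.ext_iff]
    · simp [Prod.ext_iff]
  · intro z
    obtain ⟨z1, z2⟩ := z
    simp only [Walk.support_cons, Walk.support_nil, List.mem_cons, Prod.mk.injEq,
      List.mem_singleton, List.not_mem_nil, or_false, Finset.mem_singleton]
    constructor
    · rintro (⟨rfl, rfl⟩ | ⟨rfl, rfl⟩ | ⟨rfl, rfl⟩ | ⟨rfl, rfl⟩ | ⟨rfl, rfl⟩ | ⟨rfl, rfl⟩ |
        ⟨rfl, rfl⟩) <;> rfl
    · rintro rfl
      fin_cases z2 <;> simp
  · intro x hx t _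
    rw [Finset.mem_singleton] at hx
    subst hx
    fin_cases t <;> simp


lemma good_insert (hD : ∀ t, D (t + 3) = -D t) {S : Finset A} (hS : Good D S)
    {x : A} (hx : x ∈ S) {t : Fin 6} (hy : x + D t ∉ S) :
    Good D (insert (x + D t) S) := by
  obtain ⟨v, p, hc, hsup, hedge⟩ := hS
  set y := x + D t with hydef
  have hyx : y ≠ x := fun h => hy (by rwa [h])
  have hxy : x ≠ y := fun h => hyx h.symm
  have fins : ∀ s : Fin 6, s + 4 + 1 = s + 5 ∧ s + 5 + 1 = s ∧ s + 1 + 1 = s + 2 ∧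
      s + 2 + 1 = s + 3 ∧ s + 3 + 4 = s + 1 ∧ s + 1 + 1 ≠ s ∧ s ≠ s + 1 := by decide
  have fnd : ∀ s : Fin 6, ([s+4, s+5, s, s+1, s+2, s+3] : List (Fin 6)).Nodup := by decide
  have hinj : Function.Injective (fun s : Fin 6 => ((y, s) : A × Fin 6)) :=
    fun a b hab => congrArg Prod.snd hab
  have hvtail : v ∈ p.support.tail := by
    obtain ⟨u', h', p₁, hpe⟩ := (Walk.not_nil_iff).mp hc.not_nil
    rw [hpe, Walk.support_cons, List.tail_cons]
    exact p₁.end_mem_support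
  have he : s(((x, t) : A × Fin 6), (x, t + 1)) ∈ p.edges := hedge x hx t hy
  obtain ⟨q, hq, hqs, hqe⟩ := cycle_cut p hc he
  have hqsub : ∀ z : A × Fin 6, z ∈ q.support → z.1 ∈ S := fun z hz =>
    (hsup z).mp (List.tail_subset _ (hqs.subset hz))
  have hq_no_y : ∀ s : Fin 6, ((y, s) : A × Fin 6) ∉ q.support :=
    fun s hin => hy (hqsub _ hin)
  have hq_nodup : q.support.Nodup := (Walk.isPath_def _).mp hq
  have hyD3 : y + D (t + 3) = x := by
    rw [hD, hydef]; exact add_neg_cancel_right x (D t)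
  have h0 : (rhombiTriHexGraph D).Adj (x, t) (y, t + 4) := crossAdj D x t
  have h1 : (rhombiTriHexGraph D).Adj (y, t + 4) (y, t + 5) := by
    have := hexAdj D y (t + 4); rwa [(fins t).1] at this
  have h2 : (rhombiTriHexGraph D).Adj (y, t + 5) (y, t) := by
    have := hexAdj D y (t + 5); rwa [(fins t).2.1] at this
  have h3 : (rhombiTriHexGraph D).Adj (y, t) (y, t + 1) := hexAdj D y t
  have h4 : (rhombiTriHexGraph D).Adj (y, t + 1) (y, t + 2) := by
    have := hexAdj D y (t + 1); rwa [(fins t).2.2.1] at this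
  have h5 : (rhombiTriHexGraph D).Adj (y, t + 2) (y, t + 3) := by
    have := hexAdj D y (t + 2); rwa [(fins t).2.2.2.1] at this
  have h6 : (rhombiTriHexGraph D).Adj (y, t + 3) (x, t + 1) := by
    have := crossAdj D y (t + 3)
    rwa [(fins t).2.2.2.2.1, hyD3] at this
  have hrsup : (Walk.cons h1 (Walk.cons h2 (Walk.cons h3 (Walk.cons h4 (Walk.cons h5
      (Walk.cons h6 q)))))).support
      = (([t+4, t+5, t, t+1, t+2, t+3] : List (Fin 6)).map
          (fun s => ((y, s) : A × Fin 6))) ++ q.support := by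
    simp [Walk.support_cons]
  have hredge : (Walk.cons h1 (Walk.cons h2 (Walk.cons h3 (Walk.cons h4 (Walk.cons h5
      (Walk.cons h6 q)))))).edges
      = [s(((y,t+4) : A × Fin 6),(y,t+5)), s(((y,t+5) : A × Fin 6),(y,t)),
         s(((y,t) : A × Fin 6),(y,t+1)), s(((y,t+1) : A × Fin 6),(y,t+2)),
         s(((y,t+2) : A × Fin 6),(y,t+3)), s(((y,t+3) : A × Fin 6),(x,t+1))]
        ++ q.edges := by
    simp [Walk.edges_cons]
  refine ⟨(x, t), Walk.cons h0 (Walk.cons h1 (Walk.cons h2 (Walk.cons h3 (Walk.cons h4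
    (Walk.cons h5 (Walk.cons h6 q)))))), ?_, ?_, ?_⟩
  · rw [Walk.cons_isCycle_iff]
    constructor
    · rw [Walk.isPath_def, hrsup, List.nodup_append]
      refine ⟨(fnd t).map hinj, hq_nodup, ?_⟩
      intro z hz1 z' hz2 hzz
      obtain ⟨s, -, rfl⟩ := List.mem_map.mp hz1
      subst hzz
      exact hq_no_y s hz2
    · intro hmem
      rw [hredge] at hmem
      rcases List.mem_append.mp hmem with hmem | hmem
      · simp only [List.mem_cons, List.not_mem_nil, or_false, Sym2.eq_iff,
          Prod.mk.injEq] at hmem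
        have ht1 : ¬ (t = t + 1) := (fins t).2.2.2.2.2.2
        tauto
      · exact hq_no_y (t+4) (Walk.snd_mem_support_of_mem_edges q hmem)
  · intro z
    rw [Walk.support_cons, hrsup]
    simp only [List.mem_cons, List.mem_append, List.mem_map, Finset.mem_insert]
    constructor
    · rintro (rfl | ⟨s, -, rfl⟩ | hz)
      · exact Or.inr hx
      · exact Or.inl rfl
      · exact Or.inr (hqsub z hz)
    · rintro (hz | hz)
      · have hall : ∀ s s' : Fin 6,
            s' = s+4 ∨ s' = s+5 ∨ s' = s ∨ s' = s+1 ∨ s' = s+2 ∨ s' = s+3 := by decide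
        refine Or.inr (Or.inl ⟨z.2, ?_, Prod.ext_iff.mpr ⟨hz.symm, rfl⟩⟩)
        have := hall t z.2
        tauto
      · have hzp : z ∈ p.support := (hsup z).mpr hz
        rw [Walk.support_eq_cons] at hzp
        rcases List.mem_cons.mp hzp with rfl | hzp
        · exact Or.inr (Or.inr (hqs.mem_iff.mpr hvtail))
        · exact Or.inr (Or.inr (hqs.mem_iff.mpr hzp))
  · intro x' hx' t' hyt'
    rw [Finset.mem_insert] at hx'
    rcases hx' with rfl | hx'
    · have ht' : t' ≠ t + 3 := by
        rintro rfl
        exact hyt' (by rw [hyD3]; exact Finset.mem_insert_of_mem hx)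
      have hmem5 : ∀ s s' : Fin 6, s' ≠ s + 3 →
          s' = s + 4 ∨ s' = s + 5 ∨ s' = s ∨ s' = s + 1 ∨ s' = s + 2 := by decide
      rw [Walk.edges_cons h0, hredge]
      rcases hmem5 t t' ht' with rfl | rfl | rfl | rfl | rfl
      · rw [(fins t).1]; simp
      · rw [(fins t).2.1]; simp
      · simp
      · rw [(fins t).2.2.1]; simp
      · rw [(fins t).2.2.2.1]; simp
    · have hnotS : x' + D t' ∉ S := fun hh => hyt' (Finset.mem_insert_of_mem hh)
      have hold : s(((x', t') : A × Fin 6), (x', t' + 1)) ∈ p.edges := hedge x' hx' t' hnotS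
      have hne2 : s(((x', t') : A × Fin 6), (x', t' + 1))
          ≠ s(((x, t) : A × Fin 6), (x, t + 1)) := by
        intro hh
        rcases Sym2.eq_iff.mp hh with ⟨ha1, -⟩ | ⟨ha1, ha2⟩
        · have hx1 : x' = x := congrArg Prod.fst ha1
          have ht1 : t' = t := congrArg Prod.snd ha1
          refine hyt' ?_
          rw [hx1, ht1, ← hydef]
          exact Finset.mem_insert_self y S
        · have e1 : t' = t + 1 := congrArg Prod.snd ha1
          have e2 : t' + 1 = t := congrArg Prod.snd ha2
          rw [e1] at e2
          exact (fins t).2.2.2.2.2.1 e2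
      have hqmem : s(((x', t') : A × Fin 6), (x', t' + 1)) ∈ q.edges := by
        rcases List.mem_cons.mp (hqe.mem_iff.mpr hold) with hh | hh
        · exact absurd hh hne2
        · exact hh
      rw [Walk.edges_cons h0, hredge]
      exact List.mem_cons_of_mem _ (List.mem_append_right _ hqmem)


lemma good_univ [Fintype A] (hD : ∀ t, D (t + 3) = -D t)
    (hgen : ∀ S : Finset A, (0 : A) ∈ S → (∀ x ∈ S, ∀ t, x + D t ∈ S) → ∀ a : A, a ∈ S) :
    Good D (Finset.univ : Finset A) := by
  have key : ∀ n (S : Finset A), (0 : A) ∈ S → Good D S → Sᶜ.card ≤ n →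
      Good D (Finset.univ : Finset A) := by
    intro n
    induction n with
    | zero =>
      intro S h0 hS hcard
      have h1 : Sᶜ = ∅ := Finset.card_eq_zero.mp (Nat.le_zero.mp hcard)
      have h2 : S = Finset.univ := by
        rw [← Finset.compl_empty, ← h1, compl_compl]
      exact h2 ▸ hS
    | succ n ih =>
      intro S h0 hS hcard
      by_cases hSu : S = Finset.univ
      · exact hSu ▸ hS
      · have hnc : ¬ (∀ x ∈ S, ∀ t, x + D t ∈ S) := fun h =>
          hSu (Finset.eq_univ_iff_forall.mpr (hgen S h0 h))
        push_neg at hnc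
        obtain ⟨x, hx, t, hy⟩ := hnc
        refine ih (insert (x + D t) S) (Finset.mem_insert_of_mem h0)
          (good_insert D hD hS hx hy) ?_
        rw [Finset.compl_insert]
        have hyc : x + D t ∈ Sᶜ := Finset.mem_compl.mpr hy
        have := Finset.card_erase_of_mem hyc
        omega
  exact key ({0} : Finset A)ᶜ.card {0} (Finset.mem_singleton_self 0)
    (good_base D) le_rfl

end Main

end RTH

/-- Every rhombitrihexagonal torus graph (type `{6,4,3,4}`) is Hamiltonian. -/
theorem rhombiTriHexTorusGraph_hamiltonian (L : AddSubgroup (ℤ × ℤ)) (hL : Admissible L) :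
    (rhombiTriHexTorusGraph L).Hamiltonian := by
  classical
  obtain ⟨hfin, -⟩ := hL
  haveI : Finite ((ℤ × ℤ) ⧸ L) := hfin
  cases nonempty_fintype ((ℤ × ℤ) ⧸ L)
  set D : Fin 6 → (ℤ × ℤ) ⧸ L := fun t => QuotientAddGroup.mk (d t) with hDdef
  have hd : ∀ t : Fin 6, d (t + 3) = - d t := by decide
  have hD : ∀ t, D (t + 3) = -D t := by
    intro t
    show (QuotientAddGroup.mk (d (t + 3)) : (ℤ × ℤ) ⧸ L) = - QuotientAddGroup.mk (d t)
    rw [hd t, QuotientAddGroup.mk_neg]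
  have hmk : ∀ (v w : ℤ × ℤ), (QuotientAddGroup.mk v : (ℤ × ℤ) ⧸ L) + QuotientAddGroup.mk w
      = QuotientAddGroup.mk (v + w) := fun v w => (QuotientAddGroup.mk_add L v w).symm
  have hgen : ∀ S : Finset ((ℤ × ℤ) ⧸ L), (0 : (ℤ × ℤ) ⧸ L) ∈ S →
      (∀ x ∈ S, ∀ t, x + D t ∈ S) → ∀ a, a ∈ S := by
    intro S h0 hcl a
    have hstep : ∀ (q : (ℤ × ℤ) ⧸ L) (t : Fin 6), q ∈ S → q + D t ∈ S :=
      fun q t h => hcl q h t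
    have col : ∀ r : ℤ, (QuotientAddGroup.mk ((0 : ℤ), r) : (ℤ × ℤ) ⧸ L) ∈ S := by
      intro r
      induction r using Int.induction_on with
      | zero =>
        have h00 : (((0 : ℤ), (0 : ℤ)) : ℤ × ℤ) = 0 := rfl
        rw [h00, QuotientAddGroup.mk_zero]
        exact h0
      | succ k ihk =>
        have hshow : (((0 : ℤ), (k : ℤ) + 1) : ℤ × ℤ) = ((0 : ℤ), (k : ℤ)) + d 1 := by
          simp [d, Prod.ext_iff, sub_eq_add_neg]
        rw [hshow, ← hmk]
        exact hstep _ 1 ihk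
      | pred k ihk =>
        have hshow : (((0 : ℤ), -(k : ℤ) - 1) : ℤ × ℤ) = ((0 : ℤ), -(k : ℤ)) + d 4 := by
          simp [d, Prod.ext_iff, sub_eq_add_neg]
        rw [hshow, ← hmk]
        exact hstep _ 4 ihk
    have full : ∀ p r : ℤ, (QuotientAddGroup.mk (p, r) : (ℤ × ℤ) ⧸ L) ∈ S := by
      intro p
      induction p using Int.induction_on with
      | zero => exact col
      | succ k ihk =>
        intro r
        have hshow : (((k : ℤ) + 1, r) : ℤ × ℤ) = ((k : ℤ), r) + d 0 := by
          simp [d, Prod.ext_iff, sub_eq_add_neg]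
        rw [hshow, ← hmk]
        exact hstep _ 0 (ihk r)
      | pred k ihk =>
        intro r
        have hshow : ((-(k : ℤ) - 1, r) : ℤ × ℤ) = (-(k : ℤ), r) + d 3 := by
          simp [d, Prod.ext_iff, sub_eq_add_neg]
        rw [hshow, ← hmk]
        exact hstep _ 3 (ihk r)
    obtain ⟨⟨p1, p2⟩, rfl⟩ := QuotientAddGroup.mk_surjective a
    exact full p1 p2
  obtain ⟨v, pcyc, hc, hsup, -⟩ := RTH.good_univ D hD hgen
  exact ⟨v, pcyc, hc, fun z => (hsup z).mpr (Finset.mem_univ _)⟩
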